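/- For vectors u, v ∈ ℝ^n and r ≥ 1, the inner product ⟨|u|^(r-1)u - |v|^(r-1)v, u - v⟩ is at least (1/2)|u|^(r-1)|u-v|² + (1/2)|v|^(r-1)|u-v|²; in particular it is nonnegative. -/
import Mathlib


open scoped RealInnerProductSpace

/-- Monotonicity of the Forchheimer nonlinearity: for u, v ∈ ℝⁿ and r ≥ 1,
`⟨|u|^(r-1)u - |v|^(r-1)v, u - v⟩ ≥ (1/2)|u|^(r-1)|u-v|² + (1/2)|v|^(r-1)|u-v|²`. -/
theorem stmt1 (n : ℕ) (r : ℝ) (hr : 1 ≤ r) (u v : EuclideanSpace ℝ (Fin n)) :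
    (1/2) * ‖u‖ ^ (r - 1) * ‖u - v‖ ^ 2 + (1/2) * ‖v‖ ^ (r - 1) * ‖u - v‖ ^ 2 ≤
      ⟪(‖u‖ ^ (r - 1)) • u - (‖v‖ ^ (r - 1)) • v, u - v⟫ := by
  set a := ‖u‖ ^ (r - 1) with ha
  set b := ‖v‖ ^ (r - 1) with hb
  have hre : (0:ℝ) ≤ r - 1 := by linarith
  have hmono : 0 ≤ (a - b) * (‖u‖ ^ 2 - ‖v‖ ^ 2) := by
    rcases le_total ‖u‖ ‖v‖ with h | h
    · have h1 : a ≤ b := Real.rpow_le_rpow (norm_nonneg u) h hre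
      have h2 : ‖u‖ ^ 2 ≤ ‖v‖ ^ 2 := by nlinarith [norm_nonneg u, norm_nonneg v]
      nlinarith
    · have h1 : b ≤ a := Real.rpow_le_rpow (norm_nonneg v) h hre
      have h2 : ‖v‖ ^ 2 ≤ ‖u‖ ^ 2 := by nlinarith [norm_nonneg u, norm_nonneg v]
      nlinarith
  have hns : ‖u - v‖ ^ 2 = ‖u‖ ^ 2 - 2 * ⟪u, v⟫ + ‖v‖ ^ 2 := norm_sub_sq_real u v
  have hinner : ⟪a • u - b • v, u - v⟫
      = a * ‖u‖ ^ 2 - (a + b) * ⟪u, v⟫ + b * ‖v‖ ^ 2 := by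
    simp only [inner_sub_left, inner_sub_right, real_inner_smul_left,
      real_inner_self_eq_norm_sq, real_inner_comm v u]
    ring
  rw [hinner, hns]
  nlinarith
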